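/- Let θ₁, …, θ_m ∈ [0, 2π). Then there exist complex numbers a₁, a₂ such that max_{j=1,…,m} |a₁ + e^{iθⱼ} a₂| < |a₁| + |a₂|. -/

import Mathlib

/-- If `‖z‖ = 1` and `z ≠ 1`, then `‖1 + z‖ < 2`. -/
lemma aux_norm_one_add_lt (z : ℂ) (hz : ‖z‖ = 1) (hz1 : z ≠ 1) : ‖1 + z‖ < 2 := by
  have hnsq : Complex.normSq z = 1 := by
    have := Complex.sq_norm z
    rw [hz] at this; linarith
  have hre : z.re < 1 := by
    rcases lt_or_eq_of_le (Complex.re_le_norm z) with h | h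
    · simpa [hz] using lt_of_lt_of_le h (le_of_eq hz)
    · exfalso
      have habs : z.re = 1 := by rw [h]; simpa using hz
      have him : z.im = 0 := by
        have := Complex.normSq_apply z
        nlinarith [hnsq]
      exact hz1 (Complex.ext habs him)
  have hsq : ‖1 + z‖ ^ 2 < 2 ^ 2 := by
    have : ‖1 + z‖ ^ 2 = Complex.normSq (1 + z) := by
      rw [Complex.sq_norm]
    rw [this, Complex.normSq_add]
    simp [Complex.normSq_one, hnsq, Complex.normSq_apply]
    nlinarith [hre]
  exact lt_of_pow_lt_pow_left₀ 2 (by norm_num) hsq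

/-- For finitely many angles `θ₁, …, θ_m ∈ [0, 2π)` there are complex numbers `a₁, a₂`
with `max_j |a₁ + e^{iθⱼ} a₂| < |a₁| + |a₂|`. -/
theorem stmt16 (m : ℕ) (θ : Fin m → ℝ) (hθ : ∀ j, θ j ∈ Set.Ico 0 (2 * Real.pi)) :
    ∃ a₁ a₂ : ℂ, ∀ j,
      ‖a₁ + Complex.exp ((θ j : ℂ) * Complex.I) * a₂‖ < ‖a₁‖ + ‖a₂‖ := by
  have hpi : (0:ℝ) < 2 * Real.pi := by positivity
  -- choose ψ ∈ (0, 2π) avoiding the finite set {2π - θ j}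
  have hinf : (Set.Ioo (0:ℝ) (2 * Real.pi) \ Set.range (fun j => 2 * Real.pi - θ j)).Infinite :=
    (Set.Ioo_infinite hpi).diff (Set.finite_range _)
  obtain ⟨ψ, hψmem⟩ := hinf.nonempty
  obtain ⟨⟨hψ0, hψ2⟩, hψavoid⟩ := hψmem
  refine ⟨1, Complex.exp ((ψ : ℂ) * Complex.I), fun j => ?_⟩
  have hθj := hθ j
  obtain ⟨hθ0, hθ2⟩ := hθj
  have hz : ‖Complex.exp ((ψ : ℂ) * Complex.I)‖ = 1 := by
    simpa using Complex.norm_exp_ofReal_mul_I ψ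
  rw [hz]
  have hmul : Complex.exp ((θ j : ℂ) * Complex.I) * Complex.exp ((ψ : ℂ) * Complex.I)
      = Complex.exp (((θ j + ψ : ℝ) : ℂ) * Complex.I) := by
    rw [← Complex.exp_add]; push_cast; ring_nf
  rw [hmul]
  have hne : Complex.exp (((θ j + ψ : ℝ) : ℂ) * Complex.I) ≠ 1 := by
    simp only [ne_eq, Complex.exp_eq_one_iff, not_exists]
    intro n hn
    have hI : (Complex.I : ℂ) ≠ 0 := Complex.I_ne_zero
    have hn' : ((θ j + ψ : ℝ) : ℂ) = n * (2 * Real.pi) := by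
      have h2 : ((θ j + ψ : ℝ) : ℂ) * Complex.I = (↑n * (2 * Real.pi)) * Complex.I := by
        rw [hn]; push_cast; ring
      exact mul_right_cancel₀ hI h2
    have hnR : (θ j + ψ : ℝ) = n * (2 * Real.pi) := by exact_mod_cast hn'
    have hsum0 : (0:ℝ) < θ j + ψ := by linarith
    have hsum4 : θ j + ψ < 2 * (2 * Real.pi) := by linarith
    have hn1 : n = 1 := by
      rcases lt_trichotomy n 1 with h | h | h
      · have hn0 : n ≤ 0 := by omega
        have : (n:ℝ) ≤ 0 := by exact_mod_cast hn0
        nlinarith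
      · exact h
      · have hn2 : (2:ℤ) ≤ n := by omega
        have : (2:ℝ) ≤ (n:ℝ) := by exact_mod_cast hn2
        nlinarith
    rw [hn1] at hnR
    exact hψavoid ⟨j, by push_cast at hnR ⊢; linarith⟩
  have hz2 : ‖Complex.exp (((θ j + ψ : ℝ) : ℂ) * Complex.I)‖ = 1 := by
    simpa using Complex.norm_exp_ofReal_mul_I (θ j + ψ)
  have h := aux_norm_one_add_lt _ hz2 hne
  rw [norm_one]
  calc ‖1 + Complex.exp (((θ j + ψ : ℝ) : ℂ) * Complex.I)‖ < 2 := h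
    _ = 1 + 1 := by norm_num
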